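/- Let f be a Boolean function on n bits, p ∈ (1/2,1), and let κ_0(n,p) = 1/(1 + (1/n)·((1−p)/2)^n). Then for every κ > κ_0(n,p), the distributional (p,κ)-algorithmic complexity equals the distributional algorithmic complexity: a_{p,κ}(f,π_{1/2}) = a(f,π_{1/2}). -/

import Mathlib

open Classical

noncomputable section

/-- Flip the bits of `x` in the set `B`. -/
def flipOn {ι : Type*} [DecidableEq ι] (x : ι → Bool) (B : Finset ι) : ι → Bool :=
  fun i => if i ∈ B then !(x i) else x i

/-- Pointwise sensitivity of `f` at `x`. -/
def sensAt {ι : Type*} [Fintype ι] [DecidableEq ι] (f : (ι → Bool) → Bool)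
    (x : ι → Bool) : ℕ :=
  (Finset.univ.filter fun i => f (flipOn x {i}) ≠ f x).card

/-- Pointwise block sensitivity of `f` at `x`. -/
def bsAt {ι : Type*} [DecidableEq ι] (f : (ι → Bool) → Bool) (x : ι → Bool) : ℕ :=
  sSup {m | ∃ B : Fin m → Finset ι,
    (∀ j, f (flipOn x (B j)) ≠ f x) ∧ ∀ j k, j ≠ k → Disjoint (B j) (B k)}

/-- `W` is a witness set for `f` at `x`. -/
def IsWitness {ι : Type*} (f : (ι → Bool) → Bool) (x : ι → Bool) (W : Finset ι) : Prop :=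
  ∀ y, (∀ i ∈ W, y i = x i) → f y = f x

/-- Pointwise minimum witness size of `f` at `x`. -/
def witAt {ι : Type*} (f : (ι → Bool) → Bool) (x : ι → Bool) : ℕ :=
  sInf {k | ∃ W : Finset ι, W.card = k ∧ IsWitness f x W}

/-- Decision trees querying coordinates in `ι`. -/
inductive DTree (ι : Type*) where
  | leaf : DTree ι
  | node : ι → DTree ι → DTree ι → DTree ι

/-- The set of coordinates queried by the tree `T` on input `x`. -/
def DTree.path {ι : Type*} [DecidableEq ι] : DTree ι → (ι → Bool) → Finset ι
  | .leaf, _ => ∅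
  | .node i t0 t1, x => insert i (if x i then t1.path x else t0.path x)

/-- The tree `T` determines `f`: at each leaf the queried bits witness the value of `f`. -/
def DTree.Determines {ι : Type*} [DecidableEq ι] (T : DTree ι)
    (f : (ι → Bool) → Bool) : Prop :=
  ∀ x, IsWitness f x (T.path x)

/-- A partition of the hypercube into subcubes, encoded by the map sending each point to
the code (fixed coordinates) of its part. -/
structure SubcubePartition (ι : Type*) where
  code : (ι → Bool) → (ι → Option Bool)
  self_mem : ∀ x i b, code x i = some b → x i = b
  compat : ∀ x y, (∀ i b, code x i = some b → y i = b) → code y = code x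

/-- Number of coordinates fixed by the subcube containing `x`. -/
def SubcubePartition.codim {ι : Type*} [Fintype ι] (P : SubcubePartition ι)
    (x : ι → Bool) : ℕ :=
  (Finset.univ.filter fun i => (P.code x i).isSome).card

/-- The partition determines `f`, i.e. `f` is constant on each part. -/
def SubcubePartition.Determines {ι : Type*} (P : SubcubePartition ι)
    (f : (ι → Bool) → Bool) : Prop :=
  ∀ x y, (∀ i b, P.code x i = some b → y i = b) → f y = f x

/-- Deterministic sensitivity. -/
def detSens {ι : Type*} [Fintype ι] [DecidableEq ι] (f : (ι → Bool) → Bool) : ℕ :=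
  Finset.univ.sup fun x => sensAt f x

/-- Deterministic block sensitivity. -/
def detBS {ι : Type*} [Fintype ι] [DecidableEq ι] (f : (ι → Bool) → Bool) : ℕ :=
  Finset.univ.sup fun x => bsAt f x

/-- Deterministic witness complexity. -/
def detWit {ι : Type*} [Fintype ι] [DecidableEq ι] (f : (ι → Bool) → Bool) : ℕ :=
  Finset.univ.sup fun x => witAt f x

/-- Deterministic subcube partition complexity. -/
def detSC {ι : Type*} [Fintype ι] (f : (ι → Bool) → Bool) : ℕ :=
  sInf {k | ∃ P : SubcubePartition ι, P.Determines f ∧ ∀ x, P.codim x ≤ k}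

/-- Deterministic algorithmic (decision tree) complexity. -/
def detAlg {ι : Type*} [Fintype ι] [DecidableEq ι] (f : (ι → Bool) → Bool) : ℕ :=
  sInf {k | ∃ T : DTree ι, T.Determines f ∧ ∀ x, (T.path x).card ≤ k}

/-- Weight of the configuration `x` under the product Bernoulli(p) measure `π_p`. -/
def wt {ι : Type*} [Fintype ι] (p : ℝ) (x : ι → Bool) : ℝ :=
  ∏ i, (if x i then p else 1 - p)

/-- Expectation under `π_p`. -/
def expec {ι : Type*} [Fintype ι] [DecidableEq ι] (p : ℝ) (g : (ι → Bool) → ℝ) : ℝ :=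
  ∑ x, wt p x * g x

/-- Distributional sensitivity. -/
def distSens {ι : Type*} [Fintype ι] [DecidableEq ι] (f : (ι → Bool) → Bool) (p : ℝ) : ℝ :=
  expec p fun x => (sensAt f x : ℝ)

/-- Distributional block sensitivity. -/
def distBS {ι : Type*} [Fintype ι] [DecidableEq ι] (f : (ι → Bool) → Bool) (p : ℝ) : ℝ :=
  expec p fun x => (bsAt f x : ℝ)

/-- Distributional witness complexity. -/
def distWit {ι : Type*} [Fintype ι] [DecidableEq ι] (f : (ι → Bool) → Bool) (p : ℝ) : ℝ :=
  expec p fun x => (witAt f x : ℝ)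

/-- Distributional subcube partition complexity. -/
def distSC {ι : Type*} [Fintype ι] [DecidableEq ι] (f : (ι → Bool) → Bool) (p : ℝ) : ℝ :=
  sInf {c | ∃ P : SubcubePartition ι, P.Determines f ∧
    c = expec p fun x => (P.codim x : ℝ)}

/-- Distributional algorithmic complexity. -/
def distAlg {ι : Type*} [Fintype ι] [DecidableEq ι] (f : (ι → Bool) → Bool) (p : ℝ) : ℝ :=
  sInf {c | ∃ T : DTree ι, T.Determines f ∧
    c = expec p fun x => ((T.path x).card : ℝ)}

/-- `μ x J` is the joint probability that the bits equal `x` and the random set equals `J`;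
the conditions say: the marginal of the bits is `π_p`, the random set is a.s. a witness set
for `f`, and the random set is local (conditionally on `{I = J}` and the bits on `J`, the
bits outside `J` are still i.i.d. Bernoulli(p)). -/
def IsLocalWitnessSystem {ι : Type*} [Fintype ι] [DecidableEq ι]
    (f : (ι → Bool) → Bool) (p : ℝ) (μ : (ι → Bool) → Finset ι → ℝ) : Prop :=
  (∀ x J, 0 ≤ μ x J) ∧
  (∀ x, ∑ J, μ x J = wt p x) ∧
  (∀ x J, μ x J ≠ 0 → IsWitness f x J) ∧
  (∀ (J : Finset ι) x y, (∀ i ∈ J, x i = y i) → μ x J * wt p y = μ y J * wt p x)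

/-- Distributional local witness complexity. -/
def distLocal {ι : Type*} [Fintype ι] [DecidableEq ι]
    (f : (ι → Bool) → Bool) (p : ℝ) : ℝ :=
  sInf {c | ∃ μ : (ι → Bool) → Finset ι → ℝ, IsLocalWitnessSystem f p μ ∧
    c = ∑ x, ∑ J, μ x J * (J.card : ℝ)}

/-- Trees of adaptive queries in the partial-information model: `nodeZ i` asks the
`(1-p)/p` question for bit `i` (revealing the proxy `Z_i`) and `nodeX i` asks the `0/1`
question for bit `i` (revealing the true bit `X_i`). -/
inductive PTree (n : ℕ) where
  | leaf : PTree n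
  | nodeZ : Fin n → PTree n → PTree n → PTree n
  | nodeX : Fin n → PTree n → PTree n → PTree n

/-- Running the tree on proxies `z` and true bits `x`: returns the pair
(set of bits whose proxy `Z` was queried, set of bits whose true value `X` was queried). -/
def PTree.run {n : ℕ} : PTree n → (Fin n → Bool) → (Fin n → Bool) →
    Finset (Fin n) × Finset (Fin n)
  | .leaf, _, _ => (∅, ∅)
  | .nodeZ i t0 t1, z, x =>
      (insert i (if z i then (t1.run z x).1 else (t0.run z x).1),
        if z i then (t1.run z x).2 else (t0.run z x).2)
  | .nodeX i t0 t1, z, x =>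
      ((if x i then (t1.run z x).1 else (t0.run z x).1),
        insert i (if x i then (t1.run z x).2 else (t0.run z x).2))

/-- Validity: the `0/1` question for a bit is only asked after its `(1-p)/p` question. -/
def PTree.Valid {n : ℕ} (T : PTree n) : Prop :=
  ∀ z x : Fin n → Bool, (T.run z x).2 ⊆ (T.run z x).1

/-- The tree determines `f`: at each leaf, the revealed true bits witness `f`. -/
def PTree.DeterminesP {n : ℕ} (T : PTree n) (f : (Fin n → Bool) → Bool) : Prop :=
  ∀ z x : Fin n → Bool, IsWitness f x (T.run z x).2

/-- Joint weight of `(z, x)`: the bits `X_i` are i.i.d. uniform, the proxies `Z_i` are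
uniform with `P[Z_i = X_i] = p`, and the pairs are independent across `i`. -/
def wt2 {n : ℕ} (p : ℝ) (z x : Fin n → Bool) : ℝ :=
  ∏ i, (if z i = x i then p / 2 else (1 - p) / 2)

/-- Expected cost of the tree: `κ` per bit with only the partial question asked, `1` per
bit fully revealed, at the stopping time. -/
def pCost {n : ℕ} (p κ : ℝ) (T : PTree n) : ℝ :=
  ∑ z, ∑ x, wt2 p z x *
    (κ * (((T.run z x).1 \ (T.run z x).2).card : ℝ) + (((T.run z x).2).card : ℝ))

/-- Distributional `(p,κ)`-algorithmic complexity `a_{p,κ}(f, π_{1/2})`. -/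
def aPK {n : ℕ} (f : (Fin n → Bool) → Bool) (p κ : ℝ) : ℝ :=
  sInf {c | ∃ T : PTree n, T.Valid ∧ T.DeterminesP f ∧ c = pCost p κ T}

namespace APKaux

open Finset

variable {n : ℕ}

def xv (x c : Fin n → Bool) : Fin n → Bool := fun i => Bool.xor (x i) (c i)

lemma xv_xv (x z : Fin n → Bool) : xv x (xv x z) = z := by
  funext i; simp [xv]

lemma isWitness_mono {f : (Fin n → Bool) → Bool} {x : Fin n → Bool} {W W' : Finset (Fin n)}
    (h : W ⊆ W') (hw : IsWitness f x W) : IsWitness f x W' :=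
  fun y hy => hw y fun i hi => hy i (h hi)

lemma sum_wt2 (p : ℝ) (x : Fin n → Bool) : ∑ z, wt2 p z x = (2:ℝ)⁻¹ ^ n := by
  have h := Finset.sum_prod_piFinset (Finset.univ : Finset Bool)
    (fun (i : Fin n) (b : Bool) => if b = x i then p / 2 else (1 - p) / 2)
  rw [Fintype.piFinset_univ] at h
  have h2 : ∑ z : Fin n → Bool, wt2 p z x
      = ∏ i : Fin n, ∑ b : Bool, (if b = x i then p / 2 else (1 - p) / 2) := h
  rw [h2]
  have h3 : ∀ i : Fin n, (∑ b : Bool, (if b = x i then p / 2 else (1 - p) / 2)) = (2:ℝ)⁻¹ := by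
    intro i
    rw [Fintype.univ_bool, Finset.sum_pair (by simp)]
    cases hx : x i <;> simp <;> ring
  rw [Finset.prod_congr rfl fun i _ => h3 i, Finset.prod_const]
  simp

def Pc (p : ℝ) (c : Fin n → Bool) : ℝ := ∏ i, (if c i then 1 - p else p)

lemma sum_Pc (p : ℝ) : ∑ c : Fin n → Bool, Pc p c = 1 := by
  have h := Finset.sum_prod_piFinset (Finset.univ : Finset Bool)
    (fun (_ : Fin n) (b : Bool) => if b then 1 - p else p)
  rw [Fintype.piFinset_univ] at h
  have h2 : ∑ c : Fin n → Bool, Pc p c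
      = ∏ _i : Fin n, ∑ b : Bool, (if b then 1 - p else p) := h
  rw [h2]
  have h3 : (∑ b : Bool, (if b then 1 - p else (p:ℝ))) = 1 := by
    rw [Fintype.univ_bool, Finset.sum_pair (by simp)]; norm_num
  simp [h3]

lemma Pc_nonneg {p : ℝ} (hp0 : 0 ≤ p) (hp1 : p ≤ 1) (c : Fin n → Bool) : 0 ≤ Pc p c :=
  Finset.prod_nonneg fun i _ => by split <;> linarith

lemma Pc_ge {p : ℝ} (hp0 : 1/2 ≤ p) (hp1 : p ≤ 1) (c : Fin n → Bool) :
    (1 - p) ^ n ≤ Pc p c := by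
  have : (1 - p) ^ n = ∏ _i : Fin n, (1 - p) := by
    rw [Finset.prod_const]; simp
  rw [this]
  refine Finset.prod_le_prod (fun i _ => by linarith) (fun i _ => ?_)
  split <;> linarith

lemma wt2_xv (p : ℝ) (x c : Fin n → Bool) :
    wt2 p (xv x c) x = (2:ℝ)⁻¹ ^ n * Pc p c := by
  have h : ∀ i : Fin n, (if (xv x c) i = x i then p / 2 else (1 - p) / 2)
      = (2:ℝ)⁻¹ * (if c i then 1 - p else p) := by
    intro i
    cases hx : x i <;> cases hc : c i <;> simp [xv, hx, hc] <;> ring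
  unfold wt2 Pc
  rw [Finset.prod_congr rfl fun i _ => h i, Finset.prod_mul_distrib, Finset.prod_const]
  simp

lemma sum_xv (x : Fin n → Bool) (F : (Fin n → Bool) → ℝ) :
    ∑ c, F (xv x c) = ∑ z, F z := by
  have hinv : Function.Involutive (xv x) := fun c => xv_xv x c
  exact Function.Bijective.sum_comp hinv.bijective F

lemma wt_half (x : Fin n → Bool) : wt (1/2 : ℝ) x = (2:ℝ)⁻¹ ^ n := by
  unfold wt
  have h : ∀ i : Fin n, (if x i then (1/2 : ℝ) else 1 - 1/2) = (2:ℝ)⁻¹ := by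
    intro i; split <;> norm_num
  rw [Finset.prod_congr rfl fun i _ => h i, Finset.prod_const]
  simp

end APKaux
namespace APKaux

open Finset

variable {n : ℕ}

def simC (c : Fin n → Bool) : PTree n → DTree (Fin n)
  | .leaf => .leaf
  | .nodeZ i t0 t1 =>
      .node i (if c i then simC c t1 else simC c t0) (if c i then simC c t0 else simC c t1)
  | .nodeX i t0 t1 => .node i (simC c t0) (simC c t1)

lemma simC_path (c : Fin n → Bool) (T : PTree n) (x : Fin n → Bool) :
    (simC c T).path x = (T.run (xv x c) x).1 ∪ (T.run (xv x c) x).2 := by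
  induction T with
  | leaf => simp [simC, DTree.path, PTree.run]
  | nodeZ i t0 t1 ih0 ih1 =>
    cases hx : x i <;> cases hc : c i <;>
      simp [simC, DTree.path, PTree.run, hx, hc, xv, ih0, ih1, Finset.insert_union]
  | nodeX i t0 t1 ih0 ih1 =>
    cases hx : x i <;>
      simp [simC, DTree.path, PTree.run, hx, ih0, ih1, Finset.union_insert]

lemma simC_determines (c : Fin n → Bool) {T : PTree n} {f : (Fin n → Bool) → Bool}
    (hT : T.DeterminesP f) : (simC c T).Determines f := by
  intro x
  rw [simC_path]
  exact isWitness_mono Finset.subset_union_right (hT (xv x c) x)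

def simE (c : Fin n → Bool) (i₀ : Fin n) (e : Bool) : PTree n → DTree (Fin n)
  | .leaf => .leaf
  | .nodeZ i t0 t1 =>
      if i = i₀ then (if e then simE c i₀ e t1 else simE c i₀ e t0)
      else .node i (if c i then simE c i₀ e t1 else simE c i₀ e t0)
        (if c i then simE c i₀ e t0 else simE c i₀ e t1)
  | .nodeX i t0 t1 => .node i (simE c i₀ e t0) (simE c i₀ e t1)

lemma simE_path (c : Fin n → Bool) (i₀ : Fin n) (e : Bool) (T : PTree n) (x : Fin n → Bool) :
    (simE c i₀ e T).path x
      = ((T.run (Function.update (xv x c) i₀ e) x).1 \ {i₀})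
          ∪ (T.run (Function.update (xv x c) i₀ e) x).2 := by
  induction T with
  | leaf => simp [simE, DTree.path, PTree.run]
  | nodeZ i t0 t1 ih0 ih1 =>
    rcases eq_or_ne i i₀ with rfl | hne
    · cases he : e <;> rw [he] at ih0 ih1 <;>
        simp [simE, DTree.path, PTree.run, ih0, ih1,
          Finset.insert_sdiff_of_mem _ (Finset.mem_singleton_self _)]
    · have hins : ∀ A : Finset (Fin n), insert i A \ {i₀} = insert i (A \ {i₀}) :=
        fun A => Finset.insert_sdiff_of_notMem A (by simp [hne])
      cases hx : x i <;> cases hc : c i <;>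
        simp [simE, hne, DTree.path, PTree.run, Function.update_of_ne hne, xv, hx, hc,
          ih0, ih1, hins, Finset.insert_union]
  | nodeX i t0 t1 ih0 ih1 =>
    cases hx : x i <;>
      simp [simE, DTree.path, PTree.run, hx, ih0, ih1, Finset.union_insert]

lemma simE_determines (c : Fin n → Bool) (i₀ : Fin n) (e : Bool) {T : PTree n}
    {f : (Fin n → Bool) → Bool} (hT : T.DeterminesP f) : (simE c i₀ e T).Determines f := by
  intro x
  rw [simE_path]
  exact isWitness_mono Finset.subset_union_right (hT _ x)

lemma card_bound {A B : Finset (Fin n)} (hBA : B ⊆ A) (i₀ : Fin n) :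
    ((((A \ {i₀}) ∪ B).card : ℝ))
      ≤ (A.card : ℝ) - (if i₀ ∈ A \ B then (1:ℝ) else 0) := by
  by_cases hm : i₀ ∈ A \ B
  · rw [if_pos hm]
    obtain ⟨hiA, hiB⟩ := Finset.mem_sdiff.mp hm
    have hsub : (A \ {i₀}) ∪ B ⊆ A \ {i₀} := by
      refine Finset.union_subset (Finset.Subset.refl _) ?_
      intro j hj
      refine Finset.mem_sdiff.mpr ⟨hBA hj, ?_⟩
      simp only [Finset.mem_singleton]
      rintro rfl; exact hiB hj
    have h1 : ((A \ {i₀}) ∪ B).card ≤ (A \ {i₀}).card := Finset.card_le_card hsub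
    have h2 : (A \ {i₀}).card = A.card - 1 := by
      rw [Finset.card_sdiff_of_subset (by simpa using hiA)]; simp
    have h3 : 1 ≤ A.card := Finset.card_pos.mpr ⟨i₀, hiA⟩
    have := h2 ▸ h1
    calc (((A \ {i₀}) ∪ B).card : ℝ) ≤ ((A.card - 1 : ℕ) : ℝ) := by exact_mod_cast this
      _ = (A.card : ℝ) - 1 := by rw [Nat.cast_sub h3]; simp
  · rw [if_neg hm]
    have hsub : (A \ {i₀}) ∪ B ⊆ A :=
      Finset.union_subset (Finset.sdiff_subset) hBA
    have := Finset.card_le_card hsub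
    calc (((A \ {i₀}) ∪ B).card : ℝ) ≤ (A.card : ℝ) := by exact_mod_cast this
      _ = (A.card : ℝ) - 0 := by ring

def toP : DTree (Fin n) → PTree n
  | .leaf => .leaf
  | .node i t0 t1 =>
      .nodeZ i (.nodeX i (toP t0) (toP t1)) (.nodeX i (toP t0) (toP t1))

lemma toP_run (T : DTree (Fin n)) (z x : Fin n → Bool) :
    (toP T).run z x = (T.path x, T.path x) := by
  induction T with
  | leaf => simp [toP, PTree.run, DTree.path]
  | node i t0 t1 ih0 ih1 =>
    cases hz : z i <;> cases hx : x i <;>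
      simp [toP, PTree.run, DTree.path, hz, hx, ih0, ih1]

def fullDT : List (Fin n) → DTree (Fin n)
  | [] => .leaf
  | a :: l => .node a (fullDT l) (fullDT l)

lemma fullDT_path (l : List (Fin n)) (x : Fin n → Bool) :
    (fullDT l).path x = l.toFinset := by
  induction l with
  | nil => simp [fullDT, DTree.path]
  | cons a l ih => cases hx : x a <;> simp [fullDT, DTree.path, hx, ih]

lemma fullDT_det (f : (Fin n → Bool) → Bool) :
    (fullDT (List.finRange n)).Determines f := by
  intro x y hy
  have hxy : y = x := funext fun i => hy i (by rw [fullDT_path]; simp)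
  rw [hxy]

end APKaux
namespace APKaux

open Finset

variable {n : ℕ}

lemma wt2_nonneg {p : ℝ} (hp0 : 0 ≤ p) (hp1 : p ≤ 1) (z x : Fin n → Bool) :
    0 ≤ wt2 p z x :=
  Finset.prod_nonneg fun i _ => by split <;> linarith

lemma main_lb (f : (Fin n → Bool) → Bool) (p κ : ℝ)
    (hp : 1 / 2 < p) (hp1 : p < 1) (hκ1 : κ ≤ 1) (hκ0 : 0 ≤ κ)
    (hkey : (1 - κ) * n ≤ (1 - p) ^ n * (2:ℝ)⁻¹ ^ n)
    (T : PTree n) (hv : T.Valid) (hd : T.DeterminesP f) :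
    distAlg f (1/2) ≤ pCost p κ T := by
  have hp0 : (0:ℝ) ≤ p := by linarith
  have h1p : (0:ℝ) ≤ 1 - p := by linarith
  have hη : (0:ℝ) ≤ (2:ℝ)⁻¹ ^ n := by positivity
  -- abbreviations
  set SD : Set ℝ := {c | ∃ S : DTree (Fin n), S.Determines f ∧
    c = expec (1/2 : ℝ) fun x => ((S.path x).card : ℝ)} with hSD
  have hdis : distAlg f (1/2) = sInf SD := rfl
  set dA := distAlg f (1/2) with hdAdef
  have hBdd : BddBelow SD := by
    refine ⟨0, fun cv hcv => ?_⟩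
    obtain ⟨S, hS, rfl⟩ := hcv
    exact Finset.sum_nonneg fun x _ => mul_nonneg
      (by rw [wt_half]; positivity) (Nat.cast_nonneg _)
  have hdA_le : ∀ S : DTree (Fin n), S.Determines f →
      dA ≤ ∑ x, (2:ℝ)⁻¹ ^ n * ((S.path x).card : ℝ) := by
    intro S hS
    rw [hdis]
    refine csInf_le hBdd ⟨S, hS, ?_⟩
    exact (Finset.sum_congr rfl fun x _ => by rw [wt_half]).symm
  -- G and W
  have hG : ∀ c : Fin n → Bool,
      dA ≤ ∑ x, (2:ℝ)⁻¹ ^ n * (((T.run (xv x c) x).1.card : ℝ)) := by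
    intro c
    refine le_trans (hdA_le (simC c T) (simC_determines c hd))
      (le_of_eq (Finset.sum_congr rfl fun x _ => ?_))
    rw [simC_path, Finset.union_eq_left.mpr (hv (xv x c) x)]
  have hWG : ∑ z, ∑ x, wt2 p z x * ((T.run z x).1.card : ℝ)
      = ∑ c, Pc p c * ∑ x, (2:ℝ)⁻¹ ^ n * ((T.run (xv x c) x).1.card : ℝ) := by
    rw [Finset.sum_comm]
    have h1 : ∀ x : Fin n → Bool,
        ∑ z, wt2 p z x * ((T.run z x).1.card : ℝ)
          = ∑ c, ((2:ℝ)⁻¹ ^ n * Pc p c) * ((T.run (xv x c) x).1.card : ℝ) := by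
      intro x
      rw [← sum_xv x (fun z => wt2 p z x * ((T.run z x).1.card : ℝ))]
      exact Finset.sum_congr rfl fun c _ => by rw [wt2_xv]
    rw [Finset.sum_congr rfl fun x _ => h1 x, Finset.sum_comm]
    refine Finset.sum_congr rfl fun c _ => ?_
    rw [Finset.mul_sum]
    exact Finset.sum_congr rfl fun x _ => by ring
  -- cost decomposition
  have hcard : ∀ z x : Fin n → Bool,
      (((T.run z x).1 \ (T.run z x).2).card : ℝ)
        = ((T.run z x).1.card : ℝ) - ((T.run z x).2.card : ℝ) := by
    intro z x
    rw [Finset.card_sdiff_of_subset (hv z x), Nat.cast_sub (Finset.card_le_card (hv z x))]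
  have hcost : pCost p κ T
      = κ * (∑ z, ∑ x, wt2 p z x * ((T.run z x).1.card : ℝ))
        + (1 - κ) * (∑ z, ∑ x, wt2 p z x * ((T.run z x).2.card : ℝ)) := by
    unfold pCost
    rw [Finset.mul_sum, Finset.mul_sum, ← Finset.sum_add_distrib]
    refine Finset.sum_congr rfl fun z _ => ?_
    rw [Finset.mul_sum, Finset.mul_sum, ← Finset.sum_add_distrib]
    refine Finset.sum_congr rfl fun x _ => ?_
    rw [hcard z x]; ring
  -- total mass
  have htot : ∑ z : Fin n → Bool, ∑ x : Fin n → Bool, wt2 p z x = 1 := by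
    rw [Finset.sum_comm]
    rw [Finset.sum_congr rfl fun x _ => sum_wt2 p x, Finset.sum_const, Finset.card_univ]
    rw [Fintype.card_fun]
    simp only [Fintype.card_bool, Fintype.card_fin, nsmul_eq_mul]
    rw [Nat.cast_pow, ← mul_pow]
    norm_num
  -- V ≥ W - n
  have hWV : (∑ z, ∑ x, wt2 p z x * ((T.run z x).1.card : ℝ))
      - (∑ z, ∑ x, wt2 p z x * ((T.run z x).2.card : ℝ)) ≤ (n:ℝ) := by
    have h1 : (∑ z, ∑ x, wt2 p z x * ((T.run z x).1.card : ℝ))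
        - (∑ z, ∑ x, wt2 p z x * ((T.run z x).2.card : ℝ))
        = ∑ z, ∑ x, wt2 p z x * (((T.run z x).1.card : ℝ) - ((T.run z x).2.card : ℝ)) := by
      rw [← Finset.sum_sub_distrib]
      refine Finset.sum_congr rfl fun z _ => ?_
      rw [← Finset.sum_sub_distrib]
      exact Finset.sum_congr rfl fun x _ => by ring
    rw [h1]
    have h2 : ∀ z x : Fin n → Bool,
        wt2 p z x * (((T.run z x).1.card : ℝ) - ((T.run z x).2.card : ℝ))
          ≤ wt2 p z x * (n : ℝ) := by
      intro z x
      refine mul_le_mul_of_nonneg_left ?_ (wt2_nonneg hp0 hp1.le z x)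
      have hc1 : ((T.run z x).1.card : ℝ) ≤ (n : ℝ) := by
        have h := (Finset.card_le_univ (T.run z x).1).trans_eq
          (by simp : (Finset.univ : Finset (Fin n)).card = n)
        exact_mod_cast h
      have hc2 : (0:ℝ) ≤ ((T.run z x).2.card : ℝ) := Nat.cast_nonneg _
      linarith
    calc ∑ z, ∑ x, wt2 p z x * (((T.run z x).1.card : ℝ) - ((T.run z x).2.card : ℝ))
        ≤ ∑ z, ∑ x, wt2 p z x * (n:ℝ) :=
          Finset.sum_le_sum fun z _ => Finset.sum_le_sum fun x _ => h2 z x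
      _ = (∑ z, ∑ x, wt2 p z x) * (n:ℝ) := by
          rw [Finset.sum_mul]
          exact Finset.sum_congr rfl fun z _ => by rw [Finset.sum_mul]
      _ = (n:ℝ) := by rw [htot, one_mul]
  -- W ≥ dA always
  have hW_ge : dA ≤ ∑ z, ∑ x, wt2 p z x * ((T.run z x).1.card : ℝ) := by
    rw [hWG]
    calc dA = (∑ c : Fin n → Bool, Pc p c) * dA := by rw [sum_Pc, one_mul]
      _ = ∑ c : Fin n → Bool, Pc p c * dA := by rw [Finset.sum_mul]
      _ ≤ ∑ c, Pc p c * ∑ x, (2:ℝ)⁻¹ ^ n * ((T.run (xv x c) x).1.card : ℝ) :=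
          Finset.sum_le_sum fun c _ =>
            mul_le_mul_of_nonneg_left (hG c) (Pc_nonneg hp0 hp1.le c)
  by_cases hA : ∀ z x : Fin n → Bool, ((T.run z x).1 \ (T.run z x).2) = ∅
  · -- no unmatched bits : V = W
    have hVW : (∑ z, ∑ x, wt2 p z x * ((T.run z x).2.card : ℝ))
        = ∑ z, ∑ x, wt2 p z x * ((T.run z x).1.card : ℝ) := by
      refine Finset.sum_congr rfl fun z _ => Finset.sum_congr rfl fun x _ => ?_
      have h1 : (T.run z x).1 ⊆ (T.run z x).2 :=
        Finset.sdiff_eq_empty_iff_subset.mp (hA z x)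
      rw [Finset.Subset.antisymm h1 (hv z x)]
    rw [hcost, hVW]
    calc dA ≤ ∑ z, ∑ x, wt2 p z x * ((T.run z x).1.card : ℝ) := hW_ge
      _ = κ * (∑ z, ∑ x, wt2 p z x * ((T.run z x).1.card : ℝ))
          + (1-κ) * (∑ z, ∑ x, wt2 p z x * ((T.run z x).1.card : ℝ)) := by ring
  · -- some unmatched bit
    push_neg at hA
    obtain ⟨z₀, x₀, hne0⟩ := hA
    obtain ⟨i₀, hi₀⟩ := hne0
    set cs := xv x₀ z₀ with hcs
    have hzc : xv x₀ cs = z₀ := xv_xv x₀ z₀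
    set Φ : (Fin n → Bool) → (Fin n → Bool) → ℝ := fun z x =>
      (2:ℝ)⁻¹ ^ n * (((T.run z x).1.card : ℝ)
        - (if i₀ ∈ (T.run z x).1 \ (T.run z x).2 then (1:ℝ) else 0)) with hΦ
    have hsimE : ∀ e : Bool,
        dA ≤ ∑ x, Φ (Function.update (xv x cs) i₀ e) x := by
      intro e
      refine le_trans (hdA_le (simE cs i₀ e T) (simE_determines cs i₀ e hd))
        (Finset.sum_le_sum fun x _ => ?_)
      rw [simE_path]
      simp only [hΦ]
      exact mul_le_mul_of_nonneg_left (card_bound (hv _ x) i₀) hη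
    have hpair : ∀ (x : Fin n → Bool) (F : (Fin n → Bool) → ℝ),
        F (Function.update (xv x cs) i₀ false) + F (Function.update (xv x cs) i₀ true)
          = F (xv x (Function.update cs i₀ false)) + F (xv x (Function.update cs i₀ true)) := by
      intro x F
      have hupd : ∀ e : Bool, Function.update (xv x cs) i₀ e
          = xv x (Function.update cs i₀ (Bool.xor (x i₀) e)) := by
        intro e; funext j
        rcases eq_or_ne j i₀ with rfl | hj
        · simp only [Function.update_self, xv]
          cases x j <;> cases e <;> rfl
        · simp [xv, Function.update_of_ne hj]
      rw [hupd false, hupd true]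
      cases hx : x i₀ <;> simp [hx, add_comm]
    set c0 := Function.update cs i₀ false with hc0
    set c1b := Function.update cs i₀ true with hc1b
    have hadd : dA + dA ≤ ∑ x, (Φ (xv x c0) x + Φ (xv x c1b) x) := by
      have h01 := add_le_add (hsimE false) (hsimE true)
      rw [← Finset.sum_add_distrib] at h01
      refine h01.trans (le_of_eq (Finset.sum_congr rfl fun x _ => ?_))
      exact hpair x (fun z => Φ z x)
    have hsplitΦ : ∀ cc : Fin n → Bool, (∑ x, Φ (xv x cc) x)
        = (∑ x, (2:ℝ)⁻¹ ^ n * ((T.run (xv x cc) x).1.card : ℝ))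
          - ∑ x, (2:ℝ)⁻¹ ^ n *
              (if i₀ ∈ (T.run (xv x cc) x).1 \ (T.run (xv x cc) x).2 then (1:ℝ) else 0) := by
      intro cc
      rw [← Finset.sum_sub_distrib]
      refine Finset.sum_congr rfl fun x _ => ?_
      simp only [hΦ]; ring
    have hnn : ∀ (cc x : Fin n → Bool), 0 ≤ (2:ℝ)⁻¹ ^ n *
        (if i₀ ∈ (T.run (xv x cc) x).1 \ (T.run (xv x cc) x).2 then (1:ℝ) else 0) :=
      fun cc x => mul_nonneg hη (by split <;> norm_num)
    have hcs01 : cs = c0 ∨ cs = c1b := by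
      cases hcsi : cs i₀
      · left; rw [hc0, ← hcsi, Function.update_eq_self]
      · right; rw [hc1b, ← hcsi, Function.update_eq_self]
    have hucs : (2:ℝ)⁻¹ ^ n * (if i₀ ∈ (T.run (xv x₀ cs) x₀).1 \ (T.run (xv x₀ cs) x₀).2
        then (1:ℝ) else 0) = (2:ℝ)⁻¹ ^ n := by
      rw [hzc, if_pos hi₀, mul_one]
    have hwit : (2:ℝ)⁻¹ ^ n
        ≤ (∑ x, (2:ℝ)⁻¹ ^ n *
            (if i₀ ∈ (T.run (xv x c0) x).1 \ (T.run (xv x c0) x).2 then (1:ℝ) else 0))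
          + ∑ x, (2:ℝ)⁻¹ ^ n *
            (if i₀ ∈ (T.run (xv x c1b) x).1 \ (T.run (xv x c1b) x).2 then (1:ℝ) else 0) := by
      have hs0 := Finset.single_le_sum (f := fun x => (2:ℝ)⁻¹ ^ n *
          (if i₀ ∈ (T.run (xv x c0) x).1 \ (T.run (xv x c0) x).2 then (1:ℝ) else 0))
        (fun x _ => hnn c0 x) (Finset.mem_univ x₀)
      have hs1 := Finset.single_le_sum (f := fun x => (2:ℝ)⁻¹ ^ n *
          (if i₀ ∈ (T.run (xv x c1b) x).1 \ (T.run (xv x c1b) x).2 then (1:ℝ) else 0))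
        (fun x _ => hnn c1b x) (Finset.mem_univ x₀)
      have hn0 := Finset.sum_nonneg (fun x (_ : x ∈ Finset.univ) => hnn c0 x)
      have hn1 := Finset.sum_nonneg (fun x (_ : x ∈ Finset.univ) => hnn c1b x)
      rcases hcs01 with h | h
      · rw [h] at hucs; linarith [hs0, hn1, hucs]
      · rw [h] at hucs; linarith [hs1, hn0, hucs]
    have hGpair : dA + dA + (2:ℝ)⁻¹ ^ n
        ≤ (∑ x, (2:ℝ)⁻¹ ^ n * ((T.run (xv x c0) x).1.card : ℝ))
          + ∑ x, (2:ℝ)⁻¹ ^ n * ((T.run (xv x c1b) x).1.card : ℝ) := by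
      rw [Finset.sum_add_distrib, hsplitΦ c0, hsplitΦ c1b] at hadd
      linarith [hadd, hwit]
    -- margin on W
    have hmargin : dA + (1 - p) ^ n * (2:ℝ)⁻¹ ^ n
        ≤ ∑ z, ∑ x, wt2 p z x * ((T.run z x).1.card : ℝ) := by
      rw [hWG]
      have hdecomp : (∑ c, Pc p c * ∑ x, (2:ℝ)⁻¹ ^ n * ((T.run (xv x c) x).1.card : ℝ))
          = dA + ∑ c, Pc p c *
              ((∑ x, (2:ℝ)⁻¹ ^ n * ((T.run (xv x c) x).1.card : ℝ)) - dA) := by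
        have h1 : ∀ c : Fin n → Bool,
            Pc p c * ∑ x, (2:ℝ)⁻¹ ^ n * ((T.run (xv x c) x).1.card : ℝ)
              = Pc p c * dA + Pc p c *
                ((∑ x, (2:ℝ)⁻¹ ^ n * ((T.run (xv x c) x).1.card : ℝ)) - dA) := by
          intro c; ring
        rw [Finset.sum_congr rfl fun c _ => h1 c, Finset.sum_add_distrib,
          ← Finset.sum_mul, sum_Pc, one_mul]
      rw [hdecomp]
      have hterm_nonneg : ∀ c : Fin n → Bool, 0 ≤ Pc p c *
          ((∑ x, (2:ℝ)⁻¹ ^ n * ((T.run (xv x c) x).1.card : ℝ)) - dA) :=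
        fun c => mul_nonneg (Pc_nonneg hp0 hp1.le c) (by linarith [hG c])
      have hneq : c0 ≠ c1b := by
        intro h
        have h' := congrFun h i₀
        rw [hc0, hc1b] at h'
        simp at h'
      have hpairsub : (Pc p c0 *
            ((∑ x, (2:ℝ)⁻¹ ^ n * ((T.run (xv x c0) x).1.card : ℝ)) - dA))
          + Pc p c1b * ((∑ x, (2:ℝ)⁻¹ ^ n * ((T.run (xv x c1b) x).1.card : ℝ)) - dA)
          ≤ ∑ c, Pc p c *
              ((∑ x, (2:ℝ)⁻¹ ^ n * ((T.run (xv x c) x).1.card : ℝ)) - dA) := by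
        calc (Pc p c0 * ((∑ x, (2:ℝ)⁻¹ ^ n * ((T.run (xv x c0) x).1.card : ℝ)) - dA))
              + Pc p c1b * ((∑ x, (2:ℝ)⁻¹ ^ n * ((T.run (xv x c1b) x).1.card : ℝ)) - dA)
            = ∑ c ∈ ({c0, c1b} : Finset (Fin n → Bool)), Pc p c *
                ((∑ x, (2:ℝ)⁻¹ ^ n * ((T.run (xv x c) x).1.card : ℝ)) - dA) :=
              (Finset.sum_pair (f := fun c => Pc p c *
                ((∑ x, (2:ℝ)⁻¹ ^ n * ((T.run (xv x c) x).1.card : ℝ)) - dA)) hneq).symm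
          _ ≤ ∑ c, Pc p c *
                ((∑ x, (2:ℝ)⁻¹ ^ n * ((T.run (xv x c) x).1.card : ℝ)) - dA) :=
              Finset.sum_le_sum_of_subset_of_nonneg (Finset.subset_univ _)
                (fun c _ _ => hterm_nonneg c)
      have hpn : (0:ℝ) ≤ (1 - p) ^ n := by positivity
      have hge0 : (1-p)^n * ((∑ x, (2:ℝ)⁻¹ ^ n * ((T.run (xv x c0) x).1.card : ℝ)) - dA)
          ≤ Pc p c0 * ((∑ x, (2:ℝ)⁻¹ ^ n * ((T.run (xv x c0) x).1.card : ℝ)) - dA) :=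
        mul_le_mul_of_nonneg_right (Pc_ge hp.le hp1.le c0) (by linarith [hG c0])
      have hge1 : (1-p)^n * ((∑ x, (2:ℝ)⁻¹ ^ n * ((T.run (xv x c1b) x).1.card : ℝ)) - dA)
          ≤ Pc p c1b * ((∑ x, (2:ℝ)⁻¹ ^ n * ((T.run (xv x c1b) x).1.card : ℝ)) - dA) :=
        mul_le_mul_of_nonneg_right (Pc_ge hp.le hp1.le c1b) (by linarith [hG c1b])
      have hsum : (2:ℝ)⁻¹ ^ n
          ≤ ((∑ x, (2:ℝ)⁻¹ ^ n * ((T.run (xv x c0) x).1.card : ℝ)) - dA)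
            + ((∑ x, (2:ℝ)⁻¹ ^ n * ((T.run (xv x c1b) x).1.card : ℝ)) - dA) := by
        linarith [hGpair]
      have hmul := mul_le_mul_of_nonneg_left hsum hpn
      have hexp : (1-p)^n *
            (((∑ x, (2:ℝ)⁻¹ ^ n * ((T.run (xv x c0) x).1.card : ℝ)) - dA)
              + ((∑ x, (2:ℝ)⁻¹ ^ n * ((T.run (xv x c1b) x).1.card : ℝ)) - dA))
          = (1-p)^n * ((∑ x, (2:ℝ)⁻¹ ^ n * ((T.run (xv x c0) x).1.card : ℝ)) - dA)
            + (1-p)^n * ((∑ x, (2:ℝ)⁻¹ ^ n * ((T.run (xv x c1b) x).1.card : ℝ)) - dA) := by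
        ring
      linarith [hpairsub, hge0, hge1, hmul, hexp]
    have hid : pCost p κ T
        = (∑ z, ∑ x, wt2 p z x * ((T.run z x).1.card : ℝ))
          - (1 - κ) * ((∑ z, ∑ x, wt2 p z x * ((T.run z x).1.card : ℝ))
            - ∑ z, ∑ x, wt2 p z x * ((T.run z x).2.card : ℝ)) := by
      rw [hcost]; ring
    have h2 : (1 - κ) * ((∑ z, ∑ x, wt2 p z x * ((T.run z x).1.card : ℝ))
        - ∑ z, ∑ x, wt2 p z x * ((T.run z x).2.card : ℝ)) ≤ (1 - κ) * n :=
      mul_le_mul_of_nonneg_left hWV (by linarith)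
    linarith [hkey, hmargin, hid, h2]
end APKaux
/-- for `p ∈ (1/2,1)` and `κ > κ₀(n,p) = 1/(1 + (1/n)((1-p)/2)^n)`, the
distributional `(p,κ)`-algorithmic complexity equals the distributional algorithmic
complexity under the uniform measure. -/
theorem aPK_eq_aDist (n : ℕ) (hn : 1 ≤ n) (f : (Fin n → Bool) → Bool) (p κ : ℝ)
    (hp : 1 / 2 < p) (hp1 : p < 1) (hκ1 : κ ≤ 1)
    (hκ : 1 / (1 + (1 / (n : ℝ)) * ((1 - p) / 2) ^ n) < κ) :
    aPK f p κ = distAlg f (1 / 2) := by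
  classical
  have hnR : (0:ℝ) < n := by
    have : (0:ℕ) < n := Nat.lt_of_lt_of_le Nat.zero_lt_one hn
    exact_mod_cast this
  have h1p : (0:ℝ) < 1 - p := by linarith
  have hq0 : (0:ℝ) < ((1 - p) / 2) ^ n := by positivity
  have hden : (0:ℝ) < 1 + (1 / (n:ℝ)) * ((1 - p) / 2) ^ n := by positivity
  have hκpos : (0:ℝ) < κ := lt_trans (by positivity) hκ
  have h1 : 1 < κ * (1 + (1 / (n:ℝ)) * ((1 - p) / 2) ^ n) := (div_lt_iff₀ hden).mp hκ
  have hkey : (1 - κ) * (n:ℝ) ≤ (1 - p) ^ n * (2:ℝ)⁻¹ ^ n := by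
    have h2 : 1 - κ < κ * ((1 / (n:ℝ)) * ((1 - p) / 2) ^ n) := by nlinarith [h1]
    have h3 : (1 - κ) * (n:ℝ) < κ * ((1 / (n:ℝ)) * ((1 - p) / 2) ^ n) * n :=
      mul_lt_mul_of_pos_right h2 hnR
    have h4 : κ * ((1 / (n:ℝ)) * ((1 - p) / 2) ^ n) * n = κ * ((1 - p) / 2) ^ n := by
      field_simp
    have h5 : κ * ((1 - p) / 2) ^ n ≤ ((1 - p) / 2) ^ n := by nlinarith [hq0.le]
    have h6 : ((1 - p) / 2) ^ n = (1 - p) ^ n * (2:ℝ)⁻¹ ^ n := by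
      rw [div_eq_mul_inv, mul_pow]
    calc (1 - κ) * (n:ℝ) ≤ κ * ((1 - p) / 2) ^ n := by rw [← h4]; exact h3.le
      _ ≤ ((1 - p) / 2) ^ n := h5
      _ = (1 - p) ^ n * (2:ℝ)⁻¹ ^ n := h6
  have main := APKaux.main_lb f p κ hp hp1 hκ1 hκpos.le hkey
  have hvalid : ∀ S : DTree (Fin n), (APKaux.toP S).Valid := by
    intro S z x
    rw [APKaux.toP_run]
  have hdet : ∀ S : DTree (Fin n), S.Determines f → (APKaux.toP S).DeterminesP f := by
    intro S hS z x
    rw [APKaux.toP_run]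
    exact hS x
  have hcost : ∀ S : DTree (Fin n),
      (expec (1/2 : ℝ) fun x => ((S.path x).card : ℝ)) = pCost p κ (APKaux.toP S) := by
    intro S
    refine Eq.symm ?_
    calc ∑ z, ∑ x, wt2 p z x *
          (κ * ((((APKaux.toP S).run z x).1 \ ((APKaux.toP S).run z x).2).card : ℝ)
            + ((((APKaux.toP S).run z x).2).card : ℝ))
        = ∑ z, ∑ x, wt2 p z x * ((S.path x).card : ℝ) := by
          refine Finset.sum_congr rfl fun z _ => Finset.sum_congr rfl fun x _ => ?_
          rw [APKaux.toP_run]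
          simp
      _ = ∑ x, ∑ z, wt2 p z x * ((S.path x).card : ℝ) := Finset.sum_comm
      _ = ∑ x, wt (1/2 : ℝ) x * ((S.path x).card : ℝ) := by
          refine Finset.sum_congr rfl fun x _ => ?_
          rw [← Finset.sum_mul, APKaux.sum_wt2, APKaux.wt_half]
  unfold aPK distAlg
  apply le_antisymm
  · refine csInf_le_csInf ?_ ?_ ?_
    · refine ⟨0, fun cv hcv => ?_⟩
      obtain ⟨T, hv, hd, rfl⟩ := hcv
      refine Finset.sum_nonneg fun z _ => Finset.sum_nonneg fun x _ =>
        mul_nonneg (APKaux.wt2_nonneg (by linarith) hp1.le z x) ?_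
      exact add_nonneg (mul_nonneg hκpos.le (Nat.cast_nonneg _)) (Nat.cast_nonneg _)
    · exact ⟨_, ⟨APKaux.fullDT (List.finRange n), APKaux.fullDT_det f, rfl⟩⟩
    · rintro cv ⟨S, hS, rfl⟩
      exact ⟨APKaux.toP S, hvalid S, hdet S hS, hcost S⟩
  · refine le_csInf ?_ ?_
    · exact ⟨_, ⟨APKaux.toP (APKaux.fullDT (List.finRange n)),
        hvalid _, hdet _ (APKaux.fullDT_det f), rfl⟩⟩
    · rintro b ⟨T, hv, hd, rfl⟩
      exact main T hv hd
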